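/- Every relation G on a Polish space X that is potentially in the class of complements of differences of two open sets (pot(Ď₂(Σ⁰₁))) and whose bipartite symmetrization s(G_A) is acyclic, is potentially closed (pot(Π⁰₁)). In particular, writing G = O ∪ C with O pot(Σ⁰₁) and C pot(Π⁰₁): the set O ∖ Δ(X), being a pot(Σ⁰₁) irreflexive relation with acyclic bipartite symmetrization, is a countable union of Borel rectangles A_n × B_n with A_n or B_n countable, hence pot(Δ⁰₁); and O ∩ Δ(X), a Borel set with closed vertical sections, is pot(Π⁰₁); therefore G is pot(Π⁰₁). -/

import Mathlib

/-- The symmetrization `s(A) = A ∪ A⁻¹` of a relation. -/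
def symRel {X : Type*} (A : Set (X × X)) : Set (X × X) := A ∪ {p | (p.2, p.1) ∈ A}

/-- A symmetric relation `S` is acyclic if there is no injective cycle of length at least 3. -/
def Acyclic {X : Type*} (S : Set (X × X)) : Prop :=
  ¬ ∃ (n : ℕ) (x : Fin (n + 1) → X), 2 ≤ n ∧ Function.Injective x ∧
      (∀ i : Fin n, (x i.castSucc, x i.succ) ∈ S) ∧ (x (Fin.last n), x 0) ∈ S

/-- The bipartite relation `G_A` on `2 × X` induced by `A`. -/
def BipGraph {X : Type*} (A : Set (X × X)) : Set ((Bool × X) × (Bool × X)) :=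
  {p | p.1.1 = false ∧ p.2.1 = true ∧ (p.1.2, p.2.2) ∈ A}

open Set Topology TopologicalSpace PolishSpace in
lemma key_rect {X : Type} {G : Set (X × X)} (hac : Acyclic (symRel (BipGraph G)))
    {P Q : Set X} (h : P ×ˢ Q ⊆ G) : P.Subsingleton ∨ Q.Subsingleton := by
  by_contra hc
  push_neg at hc
  obtain ⟨hP, hQ⟩ := hc
  unfold Set.Nontrivial at hP hQ
  obtain ⟨a, ha, a', ha', haa⟩ := hP
  obtain ⟨b, hb, b', hb', hbb⟩ := hQ
  have hab : (a, b) ∈ G := h (Set.mk_mem_prod ha hb)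
  have hab' : (a, b') ∈ G := h (Set.mk_mem_prod ha hb')
  have ha'b : (a', b) ∈ G := h (Set.mk_mem_prod ha' hb)
  have ha'b' : (a', b') ∈ G := h (Set.mk_mem_prod ha' hb')
  apply hac
  refine ⟨3, ![(false, a), (true, b), (false, a'), (true, b')], by norm_num, ?_, ?_, ?_⟩
  · intro i j hij
    fin_cases i <;> fin_cases j <;> simp_all
  · intro i
    fin_cases i
    · exact Or.inl ⟨rfl, rfl, hab⟩
    · exact Or.inr ⟨rfl, rfl, ha'b⟩
    · exact Or.inl ⟨rfl, rfl, ha'b'⟩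
  · exact Or.inr ⟨rfl, rfl, hab'⟩

open Set Topology TopologicalSpace PolishSpace

lemma closed_of_structure {X : Type} [t'' : TopologicalSpace X]
    {V : Set (X × X)} {A B : Set X}
    (hcover : V ⊆ A ×ˢ (univ : Set X) ∪ (univ : Set X) ×ˢ B)
    (hAc : IsClosed A) (hBc : IsClosed B)
    (hsing : ∀ x ∈ A ∪ B, IsOpen ({x} : Set X))
    (hvert : ∀ x ∈ A, IsClosed {y | (x, y) ∈ V})
    (hhorz : ∀ y ∈ B, IsClosed {x | (x, y) ∈ V}) :
    IsClosed V := by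
  rw [← isOpen_compl_iff, isOpen_prod_iff]
  intro x y hxy
  by_cases hx : x ∈ A
  · refine ⟨{x}, {y' | (x, y') ∈ V}ᶜ, hsing x (Or.inl hx), (hvert x hx).isOpen_compl,
      rfl, hxy, ?_⟩
    rintro ⟨x', y'⟩ ⟨hx', hy'⟩
    simp only [mem_singleton_iff] at hx'
    subst hx'
    exact hy'
  · by_cases hy : y ∈ B
    · refine ⟨{x' | (x', y) ∈ V}ᶜ, {y}, (hhorz y hy).isOpen_compl, hsing y (Or.inr hy),
        hxy, rfl, ?_⟩
      rintro ⟨x', y'⟩ ⟨hx', hy'⟩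
      simp only [mem_singleton_iff] at hy'
      subst hy'
      exact hx'
    · refine ⟨Aᶜ, Bᶜ, hAc.isOpen_compl, hBc.isOpen_compl, hx, hy, ?_⟩
      rintro ⟨x', y'⟩ ⟨hx', hy'⟩ hV
      rcases hcover hV with h | h
      · exact hx' h.1
      · exact hy' h.2

lemma main_aux {X : Type} [t' : TopologicalSpace X] [pol : PolishSpace X]
    {G U V : Set (X × X)} (hU : IsOpen U) (hV : IsOpen V) (hGc : Gᶜ = U \ V)
    (hkey : ∀ P Q : Set X, P ×ˢ Q ⊆ G → P.Subsingleton ∨ Q.Subsingleton) :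
    ∃ t'' : TopologicalSpace X, t'' ≤ t' ∧ @PolishSpace X t'' ∧
      @IsClosed _ (@instTopologicalSpaceProd X X t'' t'') G := by
  letI : MeasurableSpace X := borel X
  haveI : BorelSpace X := ⟨rfl⟩
  have hG : G = Uᶜ ∪ V := by
    rw [← compl_compl G, hGc, diff_eq, compl_inter, compl_compl]
  have hVG : V ⊆ G := by rw [hG]; exact subset_union_right
  obtain ⟨b, bct, -, bbasis⟩ := exists_countable_basis X
  set RA : Set (Set X × Set X) :=
    {p | p.1 ∈ b ∧ p.2 ∈ b ∧ p.1 ×ˢ p.2 ⊆ V ∧ p.1.Subsingleton} with hRA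
  set RB : Set (Set X × Set X) :=
    {p | p.1 ∈ b ∧ p.2 ∈ b ∧ p.1 ×ˢ p.2 ⊆ V ∧ p.2.Subsingleton} with hRB
  have hRAct : RA.Countable := by
    refine (bct.prod bct).mono ?_
    rw [hRA]
    exact fun p hp => ⟨hp.1, hp.2.1⟩
  have hRBct : RB.Countable := by
    refine (bct.prod bct).mono ?_
    rw [hRB]
    exact fun p hp => ⟨hp.1, hp.2.1⟩
  set A : Set X := ⋃ p ∈ RA, p.1 with hA
  set B : Set X := ⋃ p ∈ RB, p.2 with hB
  have hAct : A.Countable := by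
    refine hRAct.biUnion (fun p hp => ?_)
    rw [hRA] at hp
    exact hp.2.2.2.countable
  have hBct : B.Countable := by
    refine hRBct.biUnion (fun p hp => ?_)
    rw [hRB] at hp
    exact hp.2.2.2.countable
  have hcover : V ⊆ A ×ˢ (univ : Set X) ∪ (univ : Set X) ×ˢ B := by
    rintro ⟨x, y⟩ hxy
    obtain ⟨w, hw, hxyw, hwV⟩ := (bbasis.prod bbasis).exists_subset_of_mem_open hxy hV
    obtain ⟨s, hs, u, hu, rfl⟩ := hw
    rcases hkey s u (hwV.trans hVG) with hss | hus
    · exact Or.inl ⟨mem_biUnion (show (s, u) ∈ RA by rw [hRA]; exact ⟨hs, hu, hwV, hss⟩) hxyw.1, trivial⟩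
    · exact Or.inr ⟨trivial, mem_biUnion (show (s, u) ∈ RB by rw [hRB]; exact ⟨hs, hu, hwV, hus⟩) hxyw.2⟩
  rcases (A ∪ B).eq_empty_or_nonempty with hAB | hAB
  · have hAe : A = ∅ := by
      rw [Set.union_empty_iff] at hAB; exact hAB.1
    have hBe : B = ∅ := by
      rw [Set.union_empty_iff] at hAB; exact hAB.2
    have hVe : V = ∅ := by
      apply eq_empty_of_subset_empty
      intro p hp
      rcases hcover hp with h | h
      · rw [hAe] at h; exact h.1
      · rw [hBe] at h; exact h.2
    refine ⟨t', le_rfl, inferInstance, ?_⟩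
    rw [hG, hVe, union_empty]
    exact hU.isClosed_compl
  · obtain ⟨f, hf⟩ := ((hAct.union hBct)).exists_eq_range hAB
    have hc0 : ∀ n, IsClopenable ({f n} : Set X) := fun n => isClosed_singleton.isClopenable
    have hc1 : ∀ n, IsClopenable {y | (f n, y) ∈ V} := fun n =>
      (hV.preimage (continuous_const.prodMk continuous_id)).isClopenable
    have hc2 : ∀ n, IsClopenable {x | (x, f n) ∈ V} := fun n =>
      (hV.preimage (continuous_id.prodMk continuous_const)).isClopenable
    have hcA : IsClopenable A := hAct.measurableSet.isClopenable
    have hcB : IsClopenable B := hBct.measurableSet.isClopenable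
    set m : ℕ → TopologicalSpace X := fun n =>
      if n % 5 = 0 then (hc0 (n / 5)).choose else if n % 5 = 1 then (hc1 (n / 5)).choose
      else if n % 5 = 2 then (hc2 (n / 5)).choose else if n % 5 = 3 then hcA.choose
      else hcB.choose with hm_def
    have hm_le : ∀ n, m n ≤ t' := by
      intro n
      rw [hm_def]
      dsimp only
      split_ifs
      exacts [(hc0 (n / 5)).choose_spec.1, (hc1 (n / 5)).choose_spec.1,
        (hc2 (n / 5)).choose_spec.1, hcA.choose_spec.1, hcB.choose_spec.1]
    have hm_pol : ∀ n, @PolishSpace X (m n) := by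
      intro n
      rw [hm_def]
      beta_reduce
      by_cases h0 : n % 5 = 0
      · rw [if_pos h0]; exact (hc0 (n / 5)).choose_spec.2.1
      rw [if_neg h0]
      by_cases h1 : n % 5 = 1
      · rw [if_pos h1]; exact (hc1 (n / 5)).choose_spec.2.1
      rw [if_neg h1]
      by_cases h2 : n % 5 = 2
      · rw [if_pos h2]; exact (hc2 (n / 5)).choose_spec.2.1
      rw [if_neg h2]
      by_cases h3 : n % 5 = 3
      · rw [if_pos h3]; exact hcA.choose_spec.2.1
      rw [if_neg h3]; exact hcB.choose_spec.2.1
    obtain ⟨t'', ht''m, ht''le, ht''pol⟩ :=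
      @PolishSpace.exists_polishSpace_forall_le X ℕ _ t' pol m hm_le hm_pol
    have e0 : ∀ n, m (5 * n) = (hc0 n).choose := by
      intro n
      have h1 : 5 * n % 5 = 0 := by omega
      have h2 : 5 * n / 5 = n := by omega
      rw [hm_def]; simp [h1, h2]
    have e1 : ∀ n, m (5 * n + 1) = (hc1 n).choose := by
      intro n
      have h1 : (5 * n + 1) % 5 = 1 := by omega
      have h2 : (5 * n + 1) / 5 = n := by omega
      rw [hm_def]; simp [h1, h2]
    have e2 : ∀ n, m (5 * n + 2) = (hc2 n).choose := by
      intro n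
      have h1 : (5 * n + 2) % 5 = 2 := by omega
      have h2 : (5 * n + 2) / 5 = n := by omega
      rw [hm_def]; simp [h1, h2]
    have e3 : m 3 = hcA.choose := by rw [hm_def]; norm_num
    have e4 : m 4 = hcB.choose := by rw [hm_def]; norm_num
    have clop_sing : ∀ n, IsOpen[t''] ({f n} : Set X) := by
      intro n
      have hle := ht''m (5 * n)
      rw [e0 n] at hle
      exact ((hc0 n).choose_spec.2.2.2).mono hle
    have clop_vert : ∀ n, IsClosed[t''] {y | (f n, y) ∈ V} := by
      intro n
      have hle := ht''m (5 * n + 1)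
      rw [e1 n] at hle
      exact ((hc1 n).choose_spec.2.2.1).mono hle
    have clop_horz : ∀ n, IsClosed[t''] {x | (x, f n) ∈ V} := by
      intro n
      have hle := ht''m (5 * n + 2)
      rw [e2 n] at hle
      exact ((hc2 n).choose_spec.2.2.1).mono hle
    have hA'' : IsClosed[t''] A := by
      have hle := ht''m 3
      rw [e3] at hle
      exact (hcA.choose_spec.2.2.1).mono hle
    have hB'' : IsClosed[t''] B := by
      have hle := ht''m 4
      rw [e4] at hle
      exact (hcB.choose_spec.2.2.1).mono hle
    have hsing'' : ∀ x ∈ A ∪ B, IsOpen[t''] ({x} : Set X) := by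
      intro x hx
      rw [hf] at hx
      obtain ⟨n, rfl⟩ := hx
      exact clop_sing n
    have hvert'' : ∀ x ∈ A, IsClosed[t''] {y | (x, y) ∈ V} := by
      intro x hx
      have : x ∈ range f := by rw [← hf]; exact Or.inl hx
      obtain ⟨n, rfl⟩ := this
      exact clop_vert n
    have hhorz'' : ∀ y ∈ B, IsClosed[t''] {x | (x, y) ∈ V} := by
      intro y hy
      have : y ∈ range f := by rw [← hf]; exact Or.inr hy
      obtain ⟨n, rfl⟩ := this
      exact clop_horz n
    have hVcl : @IsClosed _ (@instTopologicalSpaceProd X X t'' t'') V :=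
      @closed_of_structure X t'' V A B hcover hA'' hB'' hsing'' hvert'' hhorz''
    have hprodle : (@instTopologicalSpaceProd X X t'' t'') ≤
        (@instTopologicalSpaceProd X X t' t') :=
      inf_le_inf (induced_mono ht''le) (induced_mono ht''le)
    refine ⟨t'', ht''le, ht''pol, ?_⟩
    rw [hG]
    exact IsClosed.union ((hU.mono hprodle).isClosed_compl) hVcl

theorem stmt18 (X : Type) (t : TopologicalSpace X) (hX : @PolishSpace X t)
    (G : Set (X × X))
    (hac : Acyclic (symRel (BipGraph G)))
    -- `G` is potentially `Ď₂(Σ⁰₁)`: for some finer Polish topology, the complement of `G`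
    -- is the difference of two open sets in the square.
    (hpot : ∃ t' : TopologicalSpace X, t' ≤ t ∧ @PolishSpace X t' ∧
      ∃ U V : Set (X × X),
        @IsOpen _ (@instTopologicalSpaceProd X X t' t') U ∧
        @IsOpen _ (@instTopologicalSpaceProd X X t' t') V ∧ Gᶜ = U \ V) :
    -- `G` is potentially closed.
    ∃ t' : TopologicalSpace X, t' ≤ t ∧ @PolishSpace X t' ∧
      @IsClosed _ (@instTopologicalSpaceProd X X t' t') G := by
  obtain ⟨t', ht't, hpol', U, V, hU, hV, hGc⟩ := hpot
  have hkey : ∀ P Q : Set X, P ×ˢ Q ⊆ G → P.Subsingleton ∨ Q.Subsingleton :=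
    fun _ _ h => key_rect hac h
  obtain ⟨t'', h1, h2, h3⟩ := @main_aux X t' hpol' G U V hU hV hGc hkey
  exact ⟨t'', h1.trans ht't, h2, h3⟩
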